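/- The sequence (1, 12, 11, 12, 1) is a symmetric O-sequence that is not unimodal. -/
import Mathlib


/-- The list of pairs `(nᵢ, i)` appearing in the `d`-binomial (Macaulay) expansion
of `n`, computed greedily. -/
def binomialExpansion : ℕ → ℕ → List (ℕ × ℕ)
  | _, 0 => []
  | 0, _ + 1 => []
  | n + 1, d + 1 =>
      let a := Nat.findGreatest (fun m => Nat.choose m (d + 1) ≤ n + 1) (n + d + 2)
      (a, d + 1) :: binomialExpansion (n + 1 - Nat.choose a (d + 1)) d
  termination_by n d => d

/-- `((n)_(d))^{+1}_{+1}` : Macaulay's upper bound for growth from degree `d` to `d+1`. -/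
def macaulayBound (n d : ℕ) : ℕ :=
  ((binomialExpansion n d).map fun p => Nat.choose (p.1 + 1) (p.2 + 1)).sum

/-- `((n)_(d))^{-1}_{-1}`. -/
def macaulayLower (n d : ℕ) : ℕ :=
  ((binomialExpansion n d).map fun p => Nat.choose (p.1 - 1) (p.2 - 1)).sum

/-- `((n)_(d))^{-1}_{0}` : the bound appearing in Green's theorem. -/
def greenBound (n d : ℕ) : ℕ :=
  ((binomialExpansion n d).map fun p => Nat.choose (p.1 - 1) p.2).sum

/-- A finite sequence of nonnegative integers, recorded as a list, is an O-sequence if it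
starts with `1` and satisfies Macaulay's growth bound in every degree. -/
def IsOSequence (h : List ℕ) : Prop :=
  h.getD 0 0 = 1 ∧
    ∀ d : ℕ, 1 ≤ d → d + 1 < h.length → h.getD (d + 1) 0 ≤ macaulayBound (h.getD d 0) d

/-- A list is unimodal if it is nondecreasing up to some index and nonincreasing afterwards,
i.e. it never strictly increases after a strict decrease. -/
def IsUnimodal (l : List ℕ) : Prop :=
  ∃ m : ℕ,
    (∀ i j : ℕ, i ≤ j → j ≤ m → j < l.length → l.getD i 0 ≤ l.getD j 0) ∧
    (∀ i j : ℕ, m ≤ i → i ≤ j → j < l.length → l.getD j 0 ≤ l.getD i 0)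

/-- A list is symmetric if it equals its reverse. -/
def IsSymmetricSeq (l : List ℕ) : Prop :=
  ∀ i : ℕ, i < l.length → l.getD i 0 = l.getD (l.length - 1 - i) 0

/-- The sequence `(1, 12, 11, 12, 1)` is a symmetric O-sequence that is not unimodal. -/
theorem one_twelve_eleven_twelve_one :
    IsSymmetricSeq [1, 12, 11, 12, 1] ∧
    IsOSequence [1, 12, 11, 12, 1] ∧
    ¬ IsUnimodal [1, 12, 11, 12, 1] := by
  refine ⟨?_, ⟨rfl, ?_⟩, ?_⟩
  · intro i hi
    simp only [List.length] at hi
    interval_cases i <;> rfl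
  · intro d hd hlt
    simp only [List.length_cons, List.length_nil] at hlt
    have hd4 : d ≤ 3 := by omega
    interval_cases d <;>
      · show (_:ℕ) ≤ macaulayBound _ _
        norm_num [macaulayBound, binomialExpansion, Nat.findGreatest, Nat.choose]
  · rintro ⟨m, h1, h2⟩
    rcases le_or_gt m 2 with hm | hm
    · have := h2 2 3 hm (by norm_num) (by norm_num)
      simp [List.getD] at this
    · have := h1 1 2 (by norm_num) hm.le (by norm_num)
      simp [List.getD] at this
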